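/- For N oscillators with all-to-all r-body couplings x^{⊗r} (r dividing N, r ≥ 2), the number of measurement circuits required is at most (d−1)^r · C(N−1, r−1) + 1, which is O(d^r N^{r−1}). -/

import Mathlib

open Matrix Finset

/-- The four single-qubit Pauli matrices: I, X, Y, Z. -/
noncomputable def pauli : Fin 4 → Matrix (Fin 2) (Fin 2) ℂ :=
  ![1, !![0, 1; 1, 0], !![0, -Complex.I; Complex.I, 0], !![1, 0; 0, -1]]

/-- The integer encoded by a bit string (qubit `i` carries bit `i`, LSB at `i = 0`). -/
def bval {m : ℕ} (b : Fin m → Fin 2) : ℕ := ∑ i : Fin m, 2 ^ (i : ℕ) * (b i : ℕ)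

/-- Matrix elements of the truncated position operator in the Fock basis. -/
noncomputable def xc (a b : ℕ) : ℂ :=
  if a = b + 1 then (Real.sqrt (b + 1) : ℂ)
  else if b = a + 1 then (Real.sqrt (a + 1) : ℂ) else 0

/-- Matrix elements of the binary-encoded position operator on one `m`-qubit register. -/
noncomputable def xe {m : ℕ} (b b' : Fin m → Fin 2) : ℂ := xc (bval b) (bval b')

/-- Matrix elements of the binary-encoded `x² + p² = ∑ₙ (2n+1)|n⟩⟨n|` on one register. -/
noncomputable def numE {m : ℕ} (b b' : Fin m → Fin 2) : ℂ :=
  if b = b' then (2 * (bval b : ℂ) + 1) else 0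

/-- The Hamiltonian of `N` binary-encoded `d = 2^m` level oscillators with all-to-all
`r`-body couplings `x^{⊗r}`: `H = ∑ᵢ (xᵢ² + pᵢ²) + ∑_{|A| = r} γ_A ∏_{i ∈ A} xᵢ`. -/
noncomputable def HamR (N m r : ℕ) (γ : Finset (Fin N) → ℝ) :
    Matrix (Fin N → Fin m → Fin 2) (Fin N → Fin m → Fin 2) ℂ :=
  Matrix.of fun b b' =>
    (∑ i : Fin N,
      if ∀ l, l ≠ i → b l = b' l then numE (b i) (b' i) else 0)
    + ∑ A : Finset (Fin N),
        if A.card = r then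
          (if ∀ l, l ∉ A → b l = b' l
            then (γ A : ℂ) * ∏ i ∈ A, xe (b i) (b' i) else 0)
        else 0

/-- A Pauli string on `N` registers of `m` qubits each. -/
noncomputable def pauliStringN {N m : ℕ} (s : Fin N → Fin m → Fin 4) :
    Matrix (Fin N → Fin m → Fin 2) (Fin N → Fin m → Fin 2) ℂ :=
  Matrix.of fun b b' => ∏ i : Fin N, ∏ k : Fin m, pauli (s i k) (b i k) (b' i k)

lemma pauli_diag_ne {σ : Fin 4} {c : Fin 2} (h : pauli σ c c ≠ 0) : σ = 0 ∨ σ = 3 := by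
  fin_cases σ <;> fin_cases c <;> simp_all [pauli, Matrix.one_apply]

lemma pauli_offdiag_ne {σ : Fin 4} {c c' : Fin 2} (hc : c ≠ c') (h : pauli σ c c' ≠ 0) :
    σ = 1 ∨ σ = 2 := by
  fin_cases σ <;> fin_cases c <;> fin_cases c' <;> simp_all [pauli, Matrix.one_apply]

lemma pauli_symm (σ : Fin 4) (c c' : Fin 2) :
    pauli σ c' c = (if σ = 2 then -1 else 1) * pauli σ c c' := by
  fin_cases σ <;> fin_cases c <;> fin_cases c' <;> simp [pauli, Matrix.one_apply]

lemma pauli_trace_ne {σ : Fin 4} (h : (∑ c : Fin 2, pauli σ c c) ≠ 0) : σ = 0 := by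
  fin_cases σ <;> simp_all [Fin.sum_univ_two, pauli, Matrix.one_apply]

lemma xc_symm (a b : ℕ) : xc a b = xc b a := by
  unfold xc; split_ifs with h1 h2 h3 h4 h5 <;> first | rfl | omega

lemma xc_ne {a b : ℕ} (h : xc a b ≠ 0) : a = b + 1 ∨ b = a + 1 := by
  unfold xc at h; split_ifs at h with h1 h2 <;> tauto

lemma xe_symm {m : ℕ} (b b' : Fin m → Fin 2) : xe b b' = xe b' b := xc_symm _ _

lemma bval_cons {m : ℕ} (b : Fin (m+1) → Fin 2) :
    bval b = (b 0 : ℕ) + 2 * bval (fun i => b i.succ) := by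
  unfold bval
  rw [Fin.sum_univ_succ, Finset.mul_sum]
  simp only [Fin.val_zero, pow_zero, one_mul, Fin.val_succ]
  congr 1
  exact Finset.sum_congr rfl fun i _ => by ring

lemma bval_inj {m : ℕ} : ∀ (b b' : Fin m → Fin 2), bval b = bval b' → b = b' := by
  induction m with
  | zero => intro b b' _; funext i; exact absurd i.2 (by omega)
  | succ m ih =>
    intro b b' h
    rw [bval_cons, bval_cons b'] at h
    have h0 : (b 0 : ℕ) < 2 := (b 0).2
    have h0' : (b' 0 : ℕ) < 2 := (b' 0).2
    have he : (b 0 : ℕ) = (b' 0 : ℕ) ∧ bval (fun i => b i.succ) = bval (fun i => b' i.succ) := by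
      omega
    have ht := ih _ _ he.2
    funext i
    refine Fin.cases ?_ ?_ i
    · exact Fin.val_injective he.1
    · intro j; exact congrFun ht j

lemma bval_succ_struct {m : ℕ} : ∀ (b b' : Fin m → Fin 2), bval b' = bval b + 1 →
    ∃ j < m, (∀ k : Fin m, (k : ℕ) ≤ j → b k ≠ b' k) ∧ (∀ k : Fin m, j < (k : ℕ) → b k = b' k) := by
  induction m with
  | zero => intro b b' h; simp [bval] at h
  | succ m ih =>
    intro b b' h
    rw [bval_cons b, bval_cons b'] at h
    have h0 : (b 0 : ℕ) < 2 := (b 0).2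
    have h0' : (b' 0 : ℕ) < 2 := (b' 0).2
    rcases (by omega : (b 0 : ℕ) = 0 ∨ (b 0 : ℕ) = 1) with hb0 | hb0 <;>
      rcases (by omega : (b' 0 : ℕ) = 0 ∨ (b' 0 : ℕ) = 1) with hb0' | hb0'
    · omega
    · -- b 0 = 0, b' 0 = 1 : tails equal
      have : bval (fun i => b i.succ) = bval (fun i => b' i.succ) := by omega
      have ht := bval_inj _ _ this
      refine ⟨0, by omega, ?_, ?_⟩
      · intro k hk
        have : k = 0 := Fin.ext (by rw [Fin.val_zero]; omega)
        subst this
        intro hc; rw [hc] at hb0; omega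
      · intro k hk
        have hke : k = (⟨(k:ℕ) - 1, by have := k.isLt; omega⟩ : Fin m).succ := by
          apply Fin.ext; simp [Fin.val_succ]; omega
        rw [hke]; exact congrFun ht _
    · -- b 0 = 1, b' 0 = 0 : carry
      have : bval (fun i => b' i.succ) = bval (fun i => b i.succ) + 1 := by omega
      obtain ⟨j, hj, hd, he⟩ := ih _ _ this
      refine ⟨j + 1, by omega, ?_, ?_⟩
      · intro k hk
        rcases Nat.eq_zero_or_pos (k : ℕ) with h1 | h1
        · have : k = 0 := Fin.ext (by rw [Fin.val_zero]; omega)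
          subst this; intro hc; rw [hc] at hb0; omega
        · have hke : k = (⟨(k:ℕ) - 1, by have := k.isLt; omega⟩ : Fin m).succ := by
            apply Fin.ext; simp [Fin.val_succ]; omega
          rw [hke]
          exact hd _ (by simp; omega)
      · intro k hk
        have hke : k = (⟨(k:ℕ) - 1, by have := k.isLt; omega⟩ : Fin m).succ := by
          apply Fin.ext; simp [Fin.val_succ]; omega
        rw [hke]
        exact he _ (by simp; omega)
    · omega

noncomputable def Qm {m : ℕ} (t : Fin m → Fin 4) (x y : Fin m → Fin 2) : ℂ :=
  ∏ k, pauli (t k) (x k) (y k)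

noncomputable def trD {m : ℕ} (t : Fin m → Fin 4) : ℂ := ∑ x, Qm t x x

noncomputable def trX {m : ℕ} (t : Fin m → Fin 4) : ℂ := ∑ x, ∑ y, Qm t x y * xe y x

lemma sum_prod_swap {ι β : Type*} [Fintype ι] [DecidableEq ι] [Fintype β] (f : ι → β → ℂ) :
    ∑ x : ι → β, ∏ i, f i (x i) = ∏ i, ∑ c, f i c := by
  rw [Finset.prod_univ_sum, Fintype.piFinset_univ]

lemma sum2_prod_swap {ι β : Type*} [Fintype ι] [DecidableEq ι] [Fintype β] (f : ι → β → β → ℂ) :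
    ∑ x : ι → β, ∑ y : ι → β, ∏ i, f i (x i) (y i) = ∏ i, ∑ c, ∑ d, f i c d := by
  rw [Finset.sum_congr rfl (fun x _ => sum_prod_swap (fun i d => f i (x i) d))]
  exact sum_prod_swap (fun i c => ∑ d, f i c d)

lemma Qm_swap {m : ℕ} (t : Fin m → Fin 4) (x y : Fin m → Fin 2) :
    Qm t y x = (-1 : ℂ) ^ (univ.filter fun k => t k = 2).card * Qm t x y := by
  unfold Qm
  rw [Finset.prod_congr rfl (fun k _ => pauli_symm (t k) (x k) (y k)), Finset.prod_mul_distrib]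
  congr 1
  rw [Finset.prod_ite, Finset.prod_const, Finset.prod_const, one_pow, mul_one]

lemma trX_even {m : ℕ} (t : Fin m → Fin 4) (h : trX t ≠ 0) :
    Even (univ.filter fun k => t k = 2).card := by
  by_contra hodd
  rw [Nat.not_even_iff_odd] at hodd
  apply h
  have h1 : trX t = ∑ x, ∑ y, Qm t y x * xe x y := by
    unfold trX; rw [Finset.sum_comm]
  have h3 : ∑ x, ∑ y, Qm t y x * xe x y = - trX t := by
    unfold trX
    rw [← Finset.sum_neg_distrib]
    refine Finset.sum_congr rfl fun x _ => ?_
    rw [← Finset.sum_neg_distrib]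
    refine Finset.sum_congr rfl fun y _ => ?_
    rw [Qm_swap, hodd.neg_one_pow, xe_symm]
    ring
  linear_combination (h1.trans h3) / 2

lemma trX_struct {m : ℕ} (t : Fin m → Fin 4) (h : trX t ≠ 0) :
    ∃ j < m, (∀ k : Fin m, (k : ℕ) ≤ j → t k = 1 ∨ t k = 2) ∧
      (∀ k : Fin m, j < (k : ℕ) → t k = 0 ∨ t k = 3) := by
  obtain ⟨x, -, hx⟩ := Finset.exists_ne_zero_of_sum_ne_zero h
  obtain ⟨y, -, hy⟩ := Finset.exists_ne_zero_of_sum_ne_zero hx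
  have hQ : Qm t x y ≠ 0 := fun h0 => hy (by rw [h0, zero_mul])
  have hxe : xe y x ≠ 0 := fun h0 => hy (by rw [h0, mul_zero])
  have hfac : ∀ k, pauli (t k) (x k) (y k) ≠ 0 := by
    intro k
    exact Finset.prod_ne_zero_iff.mp hQ k (Finset.mem_univ k)
  have key : ∃ j < m, (∀ k : Fin m, (k : ℕ) ≤ j → x k ≠ y k) ∧
      (∀ k : Fin m, j < (k : ℕ) → x k = y k) := by
    rcases xc_ne hxe with hc | hc
    · exact bval_succ_struct x y hc
    · obtain ⟨j, hj, hd, he⟩ := bval_succ_struct y x hc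
      exact ⟨j, hj, fun k hk h' => hd k hk h'.symm, fun k hk => (he k hk).symm⟩
  obtain ⟨j, hj, hd, he⟩ := key
  refine ⟨j, hj, fun k hk => pauli_offdiag_ne (hd k hk) (hfac k), fun k hk => ?_⟩
  have hf := hfac k
  rw [he k hk] at hf
  exact pauli_diag_ne hf

def keys (m : ℕ) : Finset (Fin m → Fin 2) := univ.erase (fun _ => 0)

lemma card_keys (m : ℕ) : (keys m).card = 2 ^ m - 1 := by
  rw [keys, Finset.card_erase_of_mem (Finset.mem_univ _), Finset.card_univ]
  simp [Fintype.card_fun]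

def patj {m : ℕ} (w : Fin m → Fin 2) : ℕ :=
  (univ.filter fun k : Fin m => w k = 1).sup fun k => (k : ℕ)

def pat {m : ℕ} (w : Fin m → Fin 2) : Fin m → Fin 4 := fun k =>
  if (k : ℕ) < patj w then (if w k = 1 then 2 else 1)
  else if (k : ℕ) = patj w then
    (if Odd (univ.filter fun i : Fin m => (i : ℕ) < patj w ∧ w i = 1).card then 2 else 1)
  else 3

lemma pat_ne_zero {m : ℕ} (w : Fin m → Fin 2) (k : Fin m) : pat w k ≠ 0 := by
  unfold pat; split_ifs <;> decide

def jreg {m : ℕ} (t : Fin m → Fin 4) : ℕ :=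
  (univ.filter fun k : Fin m => t k = 1 ∨ t k = 2).sup fun k => (k : ℕ)

def wreg {m : ℕ} (t : Fin m → Fin 4) : Fin m → Fin 2 := fun k =>
  if (k : ℕ) < jreg t then (if t k = 2 then 1 else 0)
  else if (k : ℕ) = jreg t then 1 else 0

section structured
variable {m : ℕ} {t : Fin m → Fin 4} {j : ℕ}
variable (hj : j < m)
variable (hpre : ∀ k : Fin m, (k : ℕ) ≤ j → t k = 1 ∨ t k = 2)
variable (hsuf : ∀ k : Fin m, j < (k : ℕ) → t k = 0 ∨ t k = 3)

include hj hpre hsuf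

lemma jreg_eq : jreg t = j := by
  apply le_antisymm
  · apply Finset.sup_le
    intro k hk
    rw [Finset.mem_filter] at hk
    by_contra hc
    rcases hsuf k (by omega) with h | h <;> rcases hk.2 with h' | h' <;> simp [h] at h'
  · have hmem : (⟨j, hj⟩ : Fin m) ∈ univ.filter (fun k : Fin m => t k = 1 ∨ t k = 2) :=
      Finset.mem_filter.mpr ⟨Finset.mem_univ _, hpre ⟨j, hj⟩ (le_refl j)⟩
    exact Finset.le_sup (f := fun k : Fin m => (k : ℕ)) hmem

lemma patj_wreg : patj (wreg t) = j := by
  have hje := jreg_eq hj hpre hsuf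
  apply le_antisymm
  · apply Finset.sup_le
    intro k hk
    rw [Finset.mem_filter] at hk
    have hw := hk.2
    unfold wreg at hw
    rw [hje] at hw
    split_ifs at hw with h1 h2 h3 <;> first | omega | exact absurd hw (by decide)
  · have hmem : (⟨j, hj⟩ : Fin m) ∈ univ.filter (fun k : Fin m => wreg t k = 1) := by
      refine Finset.mem_filter.mpr ⟨Finset.mem_univ _, ?_⟩
      simp [wreg, hje]
    exact Finset.le_sup (f := fun k : Fin m => (k : ℕ)) hmem

lemma wreg_mem_keys : wreg t ∈ keys m := by
  rw [keys, Finset.mem_erase]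
  refine ⟨?_, Finset.mem_univ _⟩
  intro hc
  have := congrFun hc ⟨j, hj⟩
  unfold wreg at this
  rw [jreg_eq hj hpre hsuf] at this
  simp at this

lemma pat_wreg (hev : Even (univ.filter fun k : Fin m => t k = 2).card) :
    ∀ k : Fin m, t k ≠ 0 → pat (wreg t) k = t k := by
  have hje := jreg_eq hj hpre hsuf
  have hpj := patj_wreg hj hpre hsuf
  intro k hk0
  unfold pat
  rw [hpj]
  rcases lt_trichotomy ((k : ℕ)) j with hlt | heq | hgt
  · rw [if_pos hlt]
    have hw : wreg t k = (if t k = 2 then 1 else 0) := by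
      unfold wreg; rw [hje, if_pos hlt]
    rcases hpre k (by omega) with h1 | h2
    · rw [h1] at hw ⊢
      rw [if_neg (by decide)] at hw
      rw [hw]; simp
    · rw [h2] at hw ⊢
      rw [if_pos rfl] at hw
      rw [hw]; simp
  · rw [if_neg (by omega), if_pos heq]
    have hfeq : (univ.filter fun i : Fin m => (i : ℕ) < j ∧ wreg t i = 1)
        = (univ.filter fun i : Fin m => (i : ℕ) < j ∧ t i = 2) := by
      apply Finset.filter_congr
      intro i _
      constructor
      · rintro ⟨h1, h2⟩
        refine ⟨h1, ?_⟩
        unfold wreg at h2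
        rw [hje, if_pos h1] at h2
        by_contra hc
        rw [if_neg hc] at h2
        exact absurd h2 (by decide)
      · rintro ⟨h1, h2⟩
        refine ⟨h1, ?_⟩
        unfold wreg
        rw [hje, if_pos h1, if_pos h2]
    rw [hfeq]
    by_cases ht2 : t k = 2
    · have hsplit : (univ.filter fun i : Fin m => t i = 2)
          = insert k (univ.filter fun i : Fin m => (i : ℕ) < j ∧ t i = 2) := by
        ext i
        simp only [Finset.mem_filter, Finset.mem_insert, Finset.mem_univ, true_and]
        constructor
        · intro h2
          rcases lt_trichotomy ((i : ℕ)) j with h | h | h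
          · right; exact ⟨h, h2⟩
          · left; exact Fin.ext (by omega)
          · rcases hsuf i h with h' | h' <;> simp [h'] at h2
        · rintro (h | ⟨-, h⟩)
          · rw [h]; exact ht2
          · exact h
      rw [hsplit, Finset.card_insert_of_notMem (by simp; omega)] at hev
      rw [if_pos (Nat.not_even_iff_odd.mp (Nat.even_add_one.mp hev))]
      exact ht2.symm
    · have hsplit : (univ.filter fun i : Fin m => t i = 2)
          = (univ.filter fun i : Fin m => (i : ℕ) < j ∧ t i = 2) := by
        ext i
        simp only [Finset.mem_filter, Finset.mem_univ, true_and]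
        constructor
        · intro h2
          rcases lt_trichotomy ((i : ℕ)) j with h | h | h
          · exact ⟨h, h2⟩
          · exact absurd h2 (by rw [show i = k from Fin.ext (by omega)]; exact ht2)
          · rcases hsuf i h with h' | h' <;> simp [h'] at h2
        · rintro ⟨-, h⟩; exact h
      rw [hsplit] at hev
      rw [if_neg (Nat.not_odd_iff_even.mpr hev)]
      rcases hpre k (by omega) with h1 | h1
      · exact h1.symm
      · exact absurd h1 ht2
  · rw [if_neg (by omega), if_neg (by omega)]
    rcases hsuf k hgt with h | h
    · exact absurd h hk0
    · exact h.symm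

end structured

lemma pauliStringN_eq {N m : ℕ} (s : Fin N → Fin m → Fin 4) (b b' : Fin N → Fin m → Fin 2) :
    pauliStringN s b b' = ∏ i, Qm (s i) (b i) (b' i) := rfl

lemma trD_ne {m : ℕ} {t : Fin m → Fin 4} (h : trD t ≠ 0) : ∀ k, t k = 0 := by
  have heq : trD t = ∏ k, ∑ c, pauli (t k) c c := by
    rw [trD]
    simp only [Qm]
    exact sum_prod_swap (fun k c => pauli (t k) c c)
  rw [heq] at h
  intro k
  exact pauli_trace_ne (Finset.prod_ne_zero_iff.mp h k (Finset.mem_univ k))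

noncomputable def Tnum {N m : ℕ} (s : Fin N → Fin m → Fin 4) (i : Fin N) : ℂ :=
  ∑ b : Fin N → Fin m → Fin 2, ∑ b' : Fin N → Fin m → Fin 2,
    pauliStringN s b b' * (if ∀ l, l ≠ i → b' l = b l then numE (b' i) (b i) else 0)

noncomputable def Tint {N m : ℕ} (s : Fin N → Fin m → Fin 4) (g : ℂ) (A : Finset (Fin N)) : ℂ :=
  ∑ b : Fin N → Fin m → Fin 2, ∑ b' : Fin N → Fin m → Fin 2,
    pauliStringN s b b' * (if ∀ l, l ∉ A → b' l = b l then g * ∏ i ∈ A, xe (b' i) (b i) else 0)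

lemma trace_decomp {N m r : ℕ} (γ : Finset (Fin N) → ℝ) (s : Fin N → Fin m → Fin 4) :
    Matrix.trace (pauliStringN s * HamR N m r γ)
      = (∑ i : Fin N, Tnum s i)
        + ∑ A : Finset (Fin N), (if A.card = r then Tint s ((γ A : ℂ)) A else 0) := by
  have h1 : Matrix.trace (pauliStringN s * HamR N m r γ)
      = ∑ b : Fin N → Fin m → Fin 2, ∑ b' : Fin N → Fin m → Fin 2,
          pauliStringN s b b' * HamR N m r γ b' b := by
    rw [Matrix.trace]
    exact Finset.sum_congr rfl fun b _ => Matrix.mul_apply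
  rw [h1]
  have h2 : ∀ b b' : Fin N → Fin m → Fin 2,
      pauliStringN s b b' * HamR N m r γ b' b
      = (∑ i : Fin N, pauliStringN s b b' *
            (if ∀ l, l ≠ i → b' l = b l then numE (b' i) (b i) else 0))
        + ∑ A : Finset (Fin N), (if A.card = r then pauliStringN s b b' *
            (if ∀ l, l ∉ A → b' l = b l then (γ A : ℂ) * ∏ i ∈ A, xe (b' i) (b i) else 0) else 0) := by
    intro b b'
    have hH : HamR N m r γ b' b
        = (∑ i : Fin N, if ∀ l, l ≠ i → b' l = b l then numE (b' i) (b i) else 0)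
          + ∑ A : Finset (Fin N),
              (if A.card = r then
                (if ∀ l, l ∉ A → b' l = b l then (γ A : ℂ) * ∏ i ∈ A, xe (b' i) (b i) else 0)
              else 0) := by simp only [HamR, Matrix.of_apply]
    rw [hH, mul_add, Finset.mul_sum, Finset.mul_sum]
    congr 1
    refine Finset.sum_congr rfl fun A _ => ?_
    rw [mul_ite, mul_zero]
  rw [Finset.sum_congr rfl fun b _ => Finset.sum_congr rfl fun b' _ => h2 b b']
  rw [Finset.sum_congr rfl fun b _ => Finset.sum_add_distrib, Finset.sum_add_distrib]
  congr 1
  · rw [Finset.sum_congr rfl fun b _ => Finset.sum_comm, Finset.sum_comm]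
    rfl
  · rw [Finset.sum_congr rfl fun b _ => Finset.sum_comm, Finset.sum_comm]
    refine Finset.sum_congr rfl fun A _ => ?_
    by_cases hA : A.card = r
    · simp only [if_pos hA, Tint]
    · simp only [if_neg hA, Finset.sum_const_zero]

lemma Tnum_ne {N m : ℕ} {s : Fin N → Fin m → Fin 4} {i : Fin N} (h : Tnum s i ≠ 0) :
    ∀ l k, s l k = 0 ∨ s l k = 3 := by
  obtain ⟨b, -, hb⟩ := Finset.exists_ne_zero_of_sum_ne_zero h
  obtain ⟨b', -, hb'⟩ := Finset.exists_ne_zero_of_sum_ne_zero hb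
  have hP : pauliStringN s b b' ≠ 0 := fun h0 => hb' (by rw [h0, zero_mul])
  have hite : (if ∀ l, l ≠ i → b' l = b l then numE (b' i) (b i) else 0) ≠ 0 :=
    fun h0 => hb' (by rw [h0, mul_zero])
  have hc : ∀ l, l ≠ i → b' l = b l := by
    by_contra hcc
    rw [if_neg hcc] at hite
    exact hite rfl
  rw [if_pos hc] at hite
  have hbi : b' i = b i := by
    by_contra hne
    rw [numE, if_neg hne] at hite
    exact hite rfl
  have hbb : b' = b := funext fun l => by
    by_cases hl : l = i
    · rw [hl]; exact hbi
    · exact hc l hl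
  subst hbb
  rw [pauliStringN_eq] at hP
  intro l k
  have hQ : Qm (s l) (b' l) (b' l) ≠ 0 := Finset.prod_ne_zero_iff.mp hP l (Finset.mem_univ l)
  exact pauli_diag_ne (Finset.prod_ne_zero_iff.mp hQ k (Finset.mem_univ k))

lemma int_factor {N m : ℕ} (s : Fin N → Fin m → Fin 4) (A : Finset (Fin N)) (g : ℂ) :
    Tint s g A = g * ∏ l, (if l ∈ A then trX (s l) else trD (s l)) := by
  classical
  have h1 : ∀ b b' : Fin N → Fin m → Fin 2,
      pauliStringN s b b' * (if ∀ l, l ∉ A → b' l = b l then g * ∏ i ∈ A, xe (b' i) (b i) else 0)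
      = g * ∏ l, (if l ∈ A then Qm (s l) (b l) (b' l) * xe (b' l) (b l)
          else (if b' l = b l then Qm (s l) (b l) (b' l) else 0)) := by
    intro b b'
    by_cases hc : ∀ l, l ∉ A → b' l = b l
    · rw [if_pos hc, pauliStringN_eq]
      have hsplit : (∏ l, (if l ∈ A then Qm (s l) (b l) (b' l) * xe (b' l) (b l)
            else (if b' l = b l then Qm (s l) (b l) (b' l) else 0)))
          = (∏ l ∈ A, Qm (s l) (b l) (b' l) * xe (b' l) (b l))
            * ∏ l ∈ Aᶜ, Qm (s l) (b l) (b' l) := by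
        rw [Finset.prod_ite]
        have hs1 : univ.filter (fun l : Fin N => l ∈ A) = A := by ext l; simp
        have hs2 : univ.filter (fun l : Fin N => ¬ l ∈ A) = Aᶜ := by ext l; simp
        rw [hs1, hs2]
        congr 1
        exact Finset.prod_congr rfl fun l hl => if_pos (hc l (Finset.mem_compl.mp hl))
      rw [hsplit, Finset.prod_mul_distrib]
      rw [← Finset.prod_mul_prod_compl A (fun l => Qm (s l) (b l) (b' l))]
      ring
    · rw [if_neg hc]
      push_neg at hc
      obtain ⟨l0, hl0, hne⟩ := hc
      have : (∏ l, (if l ∈ A then Qm (s l) (b l) (b' l) * xe (b' l) (b l)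
          else (if b' l = b l then Qm (s l) (b l) (b' l) else 0))) = 0 :=
        Finset.prod_eq_zero (Finset.mem_univ l0) (by rw [if_neg hl0, if_neg hne])
      rw [this, mul_zero, mul_zero]
  rw [Tint, Finset.sum_congr rfl fun b _ => Finset.sum_congr rfl fun b' _ => h1 b b']
  rw [Finset.sum_congr rfl fun b _ => (Finset.mul_sum _ _ _).symm, ← Finset.mul_sum]
  congr 1
  rw [sum2_prod_swap (fun (l : Fin N) (c d : Fin m → Fin 2) =>
    if l ∈ A then Qm (s l) c d * xe d c else if d = c then Qm (s l) c d else 0)]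
  refine Finset.prod_congr rfl fun l _ => ?_
  by_cases hl : l ∈ A
  · rw [if_pos hl]
    refine Finset.sum_congr rfl fun c _ => Finset.sum_congr rfl fun d _ => ?_
    rw [if_pos hl]
  · rw [if_neg hl, trD]
    refine Finset.sum_congr rfl fun c _ => ?_
    rw [Finset.sum_congr rfl fun d (_ : d ∈ univ) => by rw [if_neg hl]]
    simp

lemma Tint_ne {N m : ℕ} {s : Fin N → Fin m → Fin 4} {g : ℂ} {A : Finset (Fin N)}
    (h : Tint s g A ≠ 0) :
    (∀ l, l ∉ A → ∀ k, s l k = 0) ∧ ∀ i ∈ A, trX (s i) ≠ 0 := by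
  rw [int_factor] at h
  have hprod := right_ne_zero_of_mul h
  constructor
  · intro l hl
    have := Finset.prod_ne_zero_iff.mp hprod l (Finset.mem_univ l)
    rw [if_neg hl] at this
    exact trD_ne this
  · intro i hi
    have := Finset.prod_ne_zero_iff.mp hprod i (Finset.mem_univ i)
    rwa [if_pos hi] at this

noncomputable def FF (N m r : ℕ) (hr0 : 0 < r) :
    Finset (Fin N) × (Fin r → (Fin m → Fin 2)) → (Fin N → Fin m → Fin 4) :=
  fun Sv i => pat (Sv.2 ⟨((Sv.1.filter fun x => x ≤ i).card) % r, Nat.mod_lt _ hr0⟩)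


/-- for `N` oscillators with all-to-all `r`-body couplings `x^{⊗r}`
(`r ≥ 2`, `r ∣ N`), the Pauli terms of the Hamiltonian can be measured using at most
`(d−1)^r · C(N−1, r−1) + 1` circuits, where `d = 2^m`. -/
theorem r_body_circuit_count (N m r : ℕ) (hr : 2 ≤ r) (hrN : r ∣ N) (hm : 1 ≤ m)
    (γ : Finset (Fin N) → ℝ) :
    ∃ T : Finset (Fin N → Fin m → Fin 4),
      (∀ b ∈ T, ∀ i k, b i k ≠ 0) ∧
      (∀ s : Fin N → Fin m → Fin 4,
        Matrix.trace (pauliStringN s * HamR N m r γ) ≠ 0 →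
          ∃ b ∈ T, ∀ i k, s i k ≠ 0 → b i k = s i k) ∧
      T.card ≤ (2 ^ m - 1) ^ r * Nat.choose (N - 1) (r - 1) + 1 := by
  classical
  have hr0 : 0 < r := by omega
  set Sspace : Finset (Finset (Fin N)) :=
    (univ.filter fun i : Fin N => (i : ℕ) ≠ 0).powersetCard (r - 1) with hSspace
  set Vspace : Finset (Fin r → (Fin m → Fin 2)) :=
    Fintype.piFinset fun _ : Fin r => keys m with hVspace
  refine ⟨((Sspace ×ˢ Vspace).image (FF N m r hr0)) ∪ {fun _ _ => 3}, ?_, ?_, ?_⟩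
  · -- all entries nonzero
    intro b hb i k
    rcases Finset.mem_union.mp hb with hb | hb
    · obtain ⟨Sv, -, rfl⟩ := Finset.mem_image.mp hb
      exact pat_ne_zero _ k
    · rw [Finset.mem_singleton.mp hb]
      exact (by decide : (3 : Fin 4) ≠ 0)
  · -- coverage
    intro s hs
    have hdec := trace_decomp (r := r) γ s
    by_cases hT1 : (∑ i : Fin N, Tnum s i) = 0
    · -- interaction case
      have hT2 : (∑ A : Finset (Fin N), if A.card = r then Tint s ((γ A : ℂ)) A else 0) ≠ 0 := by
        intro h0
        exact hs (by rw [hdec, hT1, h0, add_zero])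
      obtain ⟨A, -, hA⟩ := Finset.exists_ne_zero_of_sum_ne_zero hT2
      have hcard : A.card = r := by
        by_contra hc; rw [if_neg hc] at hA; exact hA rfl
      rw [if_pos hcard] at hA
      obtain ⟨hout, hin⟩ := Tint_ne hA
      have hAne : A.Nonempty := Finset.card_pos.mp (by rw [hcard]; omega)
      set i0 := A.min' hAne with hi0
      set S := A.erase i0 with hSdef
      set rk : Fin N → ℕ := fun i => (S.filter fun x => x ≤ i).card with hrk
      have hS1 : S.card = r - 1 := by
        rw [hSdef, Finset.card_erase_of_mem (A.min'_mem hAne), hcard]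
      have hSmem : S ∈ Sspace := by
        rw [hSspace, Finset.mem_powersetCard]
        refine ⟨?_, hS1⟩
        intro x hx
        rw [Finset.mem_filter]
        refine ⟨Finset.mem_univ _, ?_⟩
        rw [hSdef, Finset.mem_erase] at hx
        have h1 : i0 ≤ x := A.min'_le x hx.2
        have h2 : x ≠ i0 := hx.1
        have : (i0 : ℕ) < (x : ℕ) := by
          rcases lt_or_eq_of_le h1 with h | h
          · exact h
          · exact absurd h.symm h2
        omega
      have key1 : ∀ i ∈ A, rk i < r := by
        intro i hi
        have : rk i ≤ S.card := Finset.card_filter_le _ _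
        omega
      have hmono : ∀ i ∈ A, ∀ i' ∈ A, i < i' → rk i < rk i' := by
        intro i hi i' hi' hlt
        apply Finset.card_lt_card
        rw [Finset.ssubset_iff_of_subset]
        · refine ⟨i', ?_, ?_⟩
          · refine Finset.mem_filter.mpr ⟨?_, le_refl _⟩
            rw [hSdef, Finset.mem_erase]
            refine ⟨?_, hi'⟩
            intro hc
            have hle := A.min'_le i hi
            rw [hc] at hlt
            exact absurd (lt_of_le_of_lt hle hlt) (lt_irrefl _)
          · intro hc
            exact absurd (le_trans (Finset.mem_filter.mp hc).2 (le_refl i)) (not_le.mpr hlt)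
        · intro x hx
          rw [Finset.mem_filter] at hx ⊢
          exact ⟨hx.1, le_trans hx.2 hlt.le⟩
      have key2 : ∀ i ∈ A, ∀ i' ∈ A, rk i = rk i' → i = i' := by
        intro i hi i' hi' he
        rcases lt_trichotomy i i' with h | h | h
        · exact absurd he (Nat.ne_of_lt (hmono i hi i' hi' h))
        · exact h
        · exact absurd he.symm (Nat.ne_of_lt (hmono i' hi' i hi h))
      set v : Fin r → (Fin m → Fin 2) := fun p =>
        if h : ∃ i ∈ A, rk i = (p : ℕ) then wreg (s h.choose) else (fun _ => 1) with hv
      have hvmem : v ∈ Vspace := by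
        rw [hVspace, Fintype.mem_piFinset]
        intro p
        rw [hv]
        beta_reduce
        split_ifs with h
        · obtain ⟨j, hj, hpre, hsuf⟩ := trX_struct _ (hin h.choose h.choose_spec.1)
          exact wreg_mem_keys hj hpre hsuf
        · rw [keys, Finset.mem_erase]
          refine ⟨?_, Finset.mem_univ _⟩
          intro hc
          have := congrFun hc ⟨0, by omega⟩
          exact absurd this (by decide)
      refine ⟨FF N m r hr0 (S, v), Finset.mem_union_left _
        (Finset.mem_image.mpr ⟨(S, v), Finset.mem_product.mpr ⟨hSmem, hvmem⟩, rfl⟩), ?_⟩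
      intro i k hk0
      by_cases hiA : i ∈ A
      · have hrkmod : rk i % r = rk i := Nat.mod_eq_of_lt (key1 i hiA)
        have hex : ∃ i' ∈ A, rk i' = ((⟨rk i % r, Nat.mod_lt _ hr0⟩ : Fin r) : ℕ) :=
          ⟨i, hiA, by simp [hrkmod]⟩
        have hFF : FF N m r hr0 (S, v) i = pat (v ⟨rk i % r, Nat.mod_lt _ hr0⟩) := rfl
        rw [hFF, hv]
        beta_reduce
        rw [dif_pos hex]
        have hchoose : hex.choose = i := by
          apply key2 _ hex.choose_spec.1 _ hiA
          rw [hex.choose_spec.2]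
          simp [hrkmod]
        rw [hchoose]
        obtain ⟨j, hj, hpre, hsuf⟩ := trX_struct _ (hin i hiA)
        exact pat_wreg hj hpre hsuf (trX_even _ (hin i hiA)) k hk0
      · exact absurd (hout i hiA k) hk0
    · -- diagonal case
      obtain ⟨i, -, hTn⟩ := Finset.exists_ne_zero_of_sum_ne_zero hT1
      have hall := Tnum_ne hTn
      refine ⟨fun _ _ => 3, Finset.mem_union_right _ (Finset.mem_singleton_self _), ?_⟩
      intro l k h0
      rcases hall l k with h | h
      · exact absurd h h0
      · exact h.symm
  · -- cardinality
    have h1 : (((Sspace ×ˢ Vspace).image (FF N m r hr0)) ∪ {fun _ _ => (3 : Fin 4)}).card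
        ≤ (Sspace ×ˢ Vspace).card + 1 := by
      refine le_trans (Finset.card_union_le _ _) ?_
      have := Finset.card_image_le (s := Sspace ×ˢ Vspace) (f := FF N m r hr0)
      simp only [Finset.card_singleton]
      omega
    have h2 : (Sspace ×ˢ Vspace).card = Nat.choose (N - 1) (r - 1) * (2 ^ m - 1) ^ r := by
      rw [Finset.card_product]
      congr 1
      · rw [hSspace, Finset.card_powersetCard]
        congr 1
        rcases Nat.eq_zero_or_pos N with hN | hN
        · subst hN
          simp
        · have : (univ.filter fun i : Fin N => (i : ℕ) ≠ 0) = univ.erase ⟨0, hN⟩ := by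
            ext i
            simp [Finset.mem_erase, Fin.ext_iff]
          rw [this, Finset.card_erase_of_mem (Finset.mem_univ _), Finset.card_univ,
            Fintype.card_fin]
      · rw [hVspace, Fintype.card_piFinset]
        simp [card_keys]
    rw [h2] at h1
    rw [mul_comm (((2:ℕ) ^ m - 1) ^ r) _]
    exact h1
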